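/- arXiv:1509.04981 — 8 statements merged into one kernel-verified Lean document; each statement's English description precedes it below -/
import Mathlib

section
/- Let x(t) = (0, 0, F(t)), y(t) = (R(t)·cos Θ(t), R(t)·sin Θ(t), −F(t)) and z(t) = (−R(t)·cos Θ(t), −R(t)·sin Θ(t), −F(t)) be curves in ℝ³. Then these three curves solve the Newtonian three-body problem with gravitational constant 1 and masses 200 (for the body x on the z-axis) and 100 each (for the bodies y and z): for all t ∈ ℝ, x''(t) = 100·(y(t)−x(t))/‖y(t)−x(t)‖³ + 100·(z(t)−x(t))/‖z(t)−x(t)‖³, y''(t) = 200·(x(t)−y(t))/‖x(t)−y(t)‖³ + 100·(z(t)−y(t))/‖z(t)−y(t)‖³, and z''(t) = 200·(x(t)−z(t))/‖x(t)−z(t)‖³ + 100·(y(t)−z(t))/‖y(t)−z(t)‖³. -/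
set_option maxHeartbeats 1000000

private def e3 (u v w : ℝ) : EuclideanSpace ℝ (Fin 3) := WithLp.toLp 2 ![u, v, w]

private lemma hasDerivAt_E3 {f g h : ℝ → ℝ} {vf vg vh t : ℝ}
    (hf : HasDerivAt f vf t) (hg : HasDerivAt g vg t) (hh : HasDerivAt h vh t) :
    HasDerivAt (fun t => e3 (f t) (g t) (h t)) (e3 vf vg vh) t := by
  have hp : HasDerivAt (fun t => (![f t, g t, h t] : Fin 3 → ℝ)) (![vf, vg, vh]) t := by
    rw [hasDerivAt_pi]
    intro i
    fin_cases i <;> simpa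
  exact ((EuclideanSpace.equiv (Fin 3) ℝ).symm.toContinuousLinearMap.hasFDerivAt.comp_hasDerivAt
    t hp :)

private lemma deriv2_E3 {f g h f1 g1 h1 f2 g2 h2 : ℝ → ℝ}
    (hf : ∀ t, HasDerivAt f (f1 t) t) (hg : ∀ t, HasDerivAt g (g1 t) t)
    (hh : ∀ t, HasDerivAt h (h1 t) t)
    (hf1 : ∀ t, HasDerivAt f1 (f2 t) t) (hg1 : ∀ t, HasDerivAt g1 (g2 t) t)
    (hh1 : ∀ t, HasDerivAt h1 (h2 t) t)
    {c : ℝ → EuclideanSpace ℝ (Fin 3)} (hc : ∀ t, c t = e3 (f t) (g t) (h t)) (t : ℝ) :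
    deriv (deriv c) t = e3 (f2 t) (g2 t) (h2 t) := by
  have hc' : c = fun t => e3 (f t) (g t) (h t) := funext hc
  subst hc'
  have hd : deriv (fun t => e3 (f t) (g t) (h t))
      = fun t => e3 (f1 t) (g1 t) (h1 t) :=
    funext fun t => (hasDerivAt_E3 (hf t) (hg t) (hh t)).deriv
  rw [hd]
  exact (hasDerivAt_E3 (hf1 t) (hg1 t) (hh1 t)).deriv

private lemma norm_e3 (u v w : ℝ) :
    ‖e3 u v w‖ = Real.sqrt (u ^ 2 + v ^ 2 + w ^ 2) := by
  rw [EuclideanSpace.norm_eq]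
  simp [e3, Fin.sum_univ_three, Real.norm_eq_abs, sq_abs]

private lemma e3_sub (u v w u' v' w' : ℝ) :
    e3 u v w - e3 u' v' w' = e3 (u - u') (v - v') (w - w') := by
  ext i; fin_cases i <;> rfl

private lemma e3_smul (r u v w : ℝ) : r • e3 u v w = e3 (r * u) (r * v) (r * w) := by
  ext i; fin_cases i <;> rfl

private lemma e3_add (u v w u' v' w' : ℝ) :
    e3 u v w + e3 u' v' w' = e3 (u + u') (v + v') (w + w') := by
  ext i; fin_cases i <;> rfl

private lemma e3_ext {u v w u' v' w' : ℝ} (h1 : u = u') (h2 : v = v') (h3 : w = w') :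
    e3 u v w = e3 u' v' w' := by rw [h1, h2, h3]

/-- the curves `x`, `y`, `z` built from solutions `F`, `R`, `Θ` of the
reduced ODE system solve the Newtonian three-body problem with gravitational
constant `1` and masses `200`, `100`, `100`. -/
theorem three_body_solution
    (a b : ℝ) (F R Θ : ℝ → ℝ)
    (hF : ContDiff ℝ 2 F) (hR : ContDiff ℝ 2 R)
    (hRpos : ∀ t, 0 < R t)
    (hΘ : Differentiable ℝ Θ)
    (hFode : ∀ t, deriv (deriv F) t =
      -400 * F t / Real.sqrt (R t ^ 2 + 4 * F t ^ 2) ^ 3)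
    (hRode : ∀ t, deriv (deriv R) t =
      100 * a ^ 2 / R t ^ 3 - 25 / R t ^ 2
        - 200 * R t / Real.sqrt (R t ^ 2 + 4 * F t ^ 2) ^ 3)
    (hΘode : ∀ t, deriv Θ t = 10 * a / R t ^ 2)
    (x y z : ℝ → EuclideanSpace ℝ (Fin 3))
    (hx : ∀ t, x t = ![0, 0, F t])
    (hy : ∀ t, y t = ![R t * Real.cos (Θ t), R t * Real.sin (Θ t), -F t])
    (hz : ∀ t, z t = ![-(R t * Real.cos (Θ t)), -(R t * Real.sin (Θ t)), -F t]) :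
    ∀ t : ℝ,
      deriv (deriv x) t =
          (100 / ‖y t - x t‖ ^ 3) • (y t - x t)
            + (100 / ‖z t - x t‖ ^ 3) • (z t - x t) ∧
      deriv (deriv y) t =
          (200 / ‖x t - y t‖ ^ 3) • (x t - y t)
            + (100 / ‖z t - y t‖ ^ 3) • (z t - y t) ∧
      deriv (deriv z) t =
          (200 / ‖x t - z t‖ ^ 3) • (x t - z t)
            + (100 / ‖y t - z t‖ ^ 3) • (y t - z t) := by
  have hxe : ∀ t, x t = e3 0 0 (F t) := fun t => congrArg (WithLp.toLp 2) (hx t)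
  have hye : ∀ t, y t = e3 (R t * Real.cos (Θ t)) (R t * Real.sin (Θ t)) (-F t) := fun t => congrArg (WithLp.toLp 2) (hy t)
  have hze : ∀ t, z t = e3 (-(R t * Real.cos (Θ t))) (-(R t * Real.sin (Θ t))) (-F t) := fun t => congrArg (WithLp.toLp 2) (hz t)
  have hRne : ∀ t, R t ≠ 0 := fun t => (hRpos t).ne'
  have hSne : ∀ t, Real.sqrt (R t ^ 2 + 4 * F t ^ 2) ≠ 0 := by
    intro t
    have h1 := hRpos t
    have : (0:ℝ) < R t ^ 2 + 4 * F t ^ 2 := by positivity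
    exact (Real.sqrt_pos.2 this).ne'
  have hFd : Differentiable ℝ F := hF.differentiable (by norm_num)
  have hRd : Differentiable ℝ R := hR.differentiable (by norm_num)
  have h2eq : (2 : WithTop ℕ∞) = 1 + 1 := by norm_num
  have hF'd : Differentiable ℝ (deriv F) := by
    have h := hF; rw [h2eq, contDiff_succ_iff_deriv] at h
    exact h.2.2.differentiable one_ne_zero
  have hR'd : Differentiable ℝ (deriv R) := by
    have h := hR; rw [h2eq, contDiff_succ_iff_deriv] at h
    exact h.2.2.differentiable one_ne_zero
  have hΘ' : ∀ t, HasDerivAt Θ (10 * a / R t ^ 2) t := fun t => hΘode t ▸ (hΘ t).hasDerivAt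
  have hR1 : ∀ t, HasDerivAt R (deriv R t) t := fun t => (hRd t).hasDerivAt
  have hF1 : ∀ t, HasDerivAt F (deriv F t) t := fun t => (hFd t).hasDerivAt
  have hF2 : ∀ t, HasDerivAt (deriv F)
      (-400 * F t / Real.sqrt (R t ^ 2 + 4 * F t ^ 2) ^ 3) t :=
    fun t => hFode t ▸ (hF'd t).hasDerivAt
  have hR2 : ∀ t, HasDerivAt (deriv R) (deriv (deriv R) t) t := fun t => (hR'd t).hasDerivAt
  -- inner helper: derivative of 10a/R^2
  have hq : ∀ t, HasDerivAt (fun t => 10 * a / R t ^ 2)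
      ((0 * R t ^ 2 - 10 * a * ((2 : ℕ) * R t ^ 1 * deriv R t)) / (R t ^ 2) ^ 2) t :=
    fun t => (hasDerivAt_const t (10 * a)).div ((hR1 t).pow 2) (pow_ne_zero 2 (hRne t))
  -- first derivatives of the angular components
  have hc1 : ∀ t, HasDerivAt (fun t => R t * Real.cos (Θ t))
      (deriv R t * Real.cos (Θ t) + R t * (-Real.sin (Θ t) * (10 * a / R t ^ 2))) t :=
    fun t => (hR1 t).mul ((Real.hasDerivAt_cos (Θ t)).comp t (hΘ' t))
  have hc2 : ∀ t, HasDerivAt (fun t => R t * Real.sin (Θ t))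
      (deriv R t * Real.sin (Θ t) + R t * (Real.cos (Θ t) * (10 * a / R t ^ 2))) t :=
    fun t => (hR1 t).mul ((Real.hasDerivAt_sin (Θ t)).comp t (hΘ' t))
  -- second derivatives of the angular components
  have hc1' : ∀ t, HasDerivAt
      (fun t => deriv R t * Real.cos (Θ t) + R t * (-Real.sin (Θ t) * (10 * a / R t ^ 2)))
      ((-25 / R t ^ 2 - 200 * R t / Real.sqrt (R t ^ 2 + 4 * F t ^ 2) ^ 3)
        * Real.cos (Θ t)) t := by
    intro t
    have hA := (hR2 t).mul ((Real.hasDerivAt_cos (Θ t)).comp t (hΘ' t))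
    have hg := (((Real.hasDerivAt_sin (Θ t)).comp t (hΘ' t)).neg).mul (hq t)
    have hB := (hR1 t).mul hg
    refine (hA.add hB).congr_deriv ?_
    rw [hRode t]
    have h1 := hRne t
    simp only [Function.comp_apply, Pi.mul_apply, Pi.neg_apply]
    field_simp
    ring
  have hc2' : ∀ t, HasDerivAt
      (fun t => deriv R t * Real.sin (Θ t) + R t * (Real.cos (Θ t) * (10 * a / R t ^ 2)))
      ((-25 / R t ^ 2 - 200 * R t / Real.sqrt (R t ^ 2 + 4 * F t ^ 2) ^ 3)
        * Real.sin (Θ t)) t := by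
    intro t
    have hA := (hR2 t).mul ((Real.hasDerivAt_sin (Θ t)).comp t (hΘ' t))
    have hg := ((Real.hasDerivAt_cos (Θ t)).comp t (hΘ' t)).mul (hq t)
    have hB := (hR1 t).mul hg
    refine (hA.add hB).congr_deriv ?_
    rw [hRode t]
    have h1 := hRne t
    simp only [Function.comp_apply, Pi.mul_apply, Pi.neg_apply]
    field_simp
    ring
  -- third component of y and z
  have hc3 : ∀ t, HasDerivAt (fun t => -F t) (-deriv F t) t := fun t => (hF1 t).neg
  have hc3' : ∀ t, HasDerivAt (fun t => -deriv F t)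
      (400 * F t / Real.sqrt (R t ^ 2 + 4 * F t ^ 2) ^ 3) t :=
    fun t => (hF2 t).neg.congr_deriv (by ring)
  -- second derivatives of the curves
  have hxx : ∀ t, deriv (deriv x) t =
      e3 0 0 (-400 * F t / Real.sqrt (R t ^ 2 + 4 * F t ^ 2) ^ 3) :=
    deriv2_E3 (fun t => hasDerivAt_const t 0) (fun t => hasDerivAt_const t 0) hF1
      (fun t => hasDerivAt_const t 0) (fun t => hasDerivAt_const t 0) hF2 hxe
  have hyy : ∀ t, deriv (deriv y) t =
      e3 ((-25 / R t ^ 2 - 200 * R t / Real.sqrt (R t ^ 2 + 4 * F t ^ 2) ^ 3)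
            * Real.cos (Θ t))
        ((-25 / R t ^ 2 - 200 * R t / Real.sqrt (R t ^ 2 + 4 * F t ^ 2) ^ 3)
            * Real.sin (Θ t))
        (400 * F t / Real.sqrt (R t ^ 2 + 4 * F t ^ 2) ^ 3) :=
    deriv2_E3 hc1 hc2 hc3 hc1' hc2' hc3' hye
  have hzz : ∀ t, deriv (deriv z) t =
      e3 (-((-25 / R t ^ 2 - 200 * R t / Real.sqrt (R t ^ 2 + 4 * F t ^ 2) ^ 3)
            * Real.cos (Θ t)))
        (-((-25 / R t ^ 2 - 200 * R t / Real.sqrt (R t ^ 2 + 4 * F t ^ 2) ^ 3)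
            * Real.sin (Θ t)))
        (400 * F t / Real.sqrt (R t ^ 2 + 4 * F t ^ 2) ^ 3) :=
    deriv2_E3 (fun t => (hc1 t).neg) (fun t => (hc2 t).neg) hc3
      (fun t => (hc1' t).neg) (fun t => (hc2' t).neg) hc3' hze
  intro t
  have htrig := Real.sin_sq_add_cos_sq (Θ t)
  have hr := hRne t
  have hs := hSne t
  have hsq : Real.sqrt (R t ^ 2 + 4 * F t ^ 2) ^ 2 = R t ^ 2 + 4 * F t ^ 2 :=
    Real.sq_sqrt (by positivity)
  have hRnn : (0:ℝ) ≤ R t := (hRpos t).le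
  refine ⟨?_, ?_, ?_⟩
  · rw [hxx t, hxe t, hye t, hze t, e3_sub, e3_sub, norm_e3, norm_e3, e3_smul, e3_smul, e3_add]
    have hn1 : (R t * Real.cos (Θ t) - 0) ^ 2 + (R t * Real.sin (Θ t) - 0) ^ 2
        + (-F t - F t) ^ 2 = R t ^ 2 + 4 * F t ^ 2 := by
      linear_combination (R t ^ 2) * htrig
    have hn2 : (-(R t * Real.cos (Θ t)) - 0) ^ 2 + (-(R t * Real.sin (Θ t)) - 0) ^ 2
        + (-F t - F t) ^ 2 = R t ^ 2 + 4 * F t ^ 2 := by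
      linear_combination (R t ^ 2) * htrig
    rw [hn1, hn2]
    exact e3_ext (by ring) (by ring) (by field_simp; ring)
  · rw [hyy t, hxe t, hye t, hze t, e3_sub, e3_sub, norm_e3, norm_e3, e3_smul, e3_smul, e3_add]
    have hn1 : (0 - R t * Real.cos (Θ t)) ^ 2 + (0 - R t * Real.sin (Θ t)) ^ 2
        + (F t - -F t) ^ 2 = R t ^ 2 + 4 * F t ^ 2 := by
      linear_combination (R t ^ 2) * htrig
    have hn2 : (-(R t * Real.cos (Θ t)) - R t * Real.cos (Θ t)) ^ 2
        + (-(R t * Real.sin (Θ t)) - R t * Real.sin (Θ t)) ^ 2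
        + (-F t - -F t) ^ 2 = (2 * R t) ^ 2 := by
      linear_combination (4 * R t ^ 2) * htrig
    rw [hn1, hn2, Real.sqrt_sq (by positivity)]
    exact e3_ext (by field_simp; ring) (by field_simp; ring) (by field_simp; ring)
  · rw [hzz t, hxe t, hye t, hze t, e3_sub, e3_sub, norm_e3, norm_e3, e3_smul, e3_smul, e3_add]
    have hn1 : (0 - -(R t * Real.cos (Θ t))) ^ 2 + (0 - -(R t * Real.sin (Θ t))) ^ 2
        + (F t - -F t) ^ 2 = R t ^ 2 + 4 * F t ^ 2 := by
      linear_combination (R t ^ 2) * htrig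
    have hn2 : (R t * Real.cos (Θ t) - -(R t * Real.cos (Θ t))) ^ 2
        + (R t * Real.sin (Θ t) - -(R t * Real.sin (Θ t))) ^ 2
        + (-F t - -F t) ^ 2 = (2 * R t) ^ 2 := by
      linear_combination (4 * R t ^ 2) * htrig
    rw [hn1, hn2, Real.sqrt_sq (by positivity)]
    exact e3_ext (by field_simp; ring) (by field_simp; ring) (by field_simp; ring)
end

section
/- If T ∈ ℝ satisfies F'(T) = 0 and R'(T) = 0, then for all t ∈ ℝ one has F(T + t) = F(T − t) and R(T + t) = R(T − t); that is, both F and R are even about t = T. -/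
open Set Filter Topology

/-- if `F' T = 0` and `R' T = 0`, then `F` and `R` are even about `t = T`. -/
theorem even_symmetry_about_T
    (a b : ℝ) (F R : ℝ → ℝ)
    (hF : ContDiff ℝ 2 F) (hR : ContDiff ℝ 2 R)
    (hRpos : ∀ t, 0 < R t)
    (hFode : ∀ t, deriv (deriv F) t =
      -400 * F t / Real.sqrt (R t ^ 2 + 4 * F t ^ 2) ^ 3)
    (hRode : ∀ t, deriv (deriv R) t =
      100 * a ^ 2 / R t ^ 3 - 25 / R t ^ 2
        - 200 * R t / Real.sqrt (R t ^ 2 + 4 * F t ^ 2) ^ 3)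
    (T : ℝ) (hFT : deriv F T = 0) (hRT : deriv R T = 0) :
    ∀ t : ℝ, F (T + t) = F (T - t) ∧ R (T + t) = R (T - t) := by
  have hFd : Differentiable ℝ F := hF.differentiable (by norm_num)
  have hRd : Differentiable ℝ R := hR.differentiable (by norm_num)
  have h2 : (2 : WithTop ℕ∞) = 1 + 1 := by norm_num
  have hF2 : ContDiff ℝ 1 (deriv F) := (contDiff_succ_iff_deriv.mp (h2 ▸ hF)).2.2
  have hR2 : ContDiff ℝ 1 (deriv R) := (contDiff_succ_iff_deriv.mp (h2 ▸ hR)).2.2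
  have hF1 : ∀ u, HasDerivAt F (deriv F u) u := fun u => (hFd u).hasDerivAt
  have hR1 : ∀ u, HasDerivAt R (deriv R u) u := fun u => (hRd u).hasDerivAt
  have hF2' : ∀ u, HasDerivAt (deriv F) (deriv (deriv F) u) u :=
    fun u => (hF2.differentiable (by norm_num) u).hasDerivAt
  have hR2' : ∀ u, HasDerivAt (deriv R) (deriv (deriv R) u) u :=
    fun u => (hR2.differentiable (by norm_num) u).hasDerivAt
  set V : ℝ × ℝ × ℝ × ℝ → ℝ × ℝ × ℝ × ℝ := fun p =>
    (p.2.1, (-400 * p.1 / Real.sqrt (p.2.2.1 ^ 2 + 4 * p.1 ^ 2) ^ 3,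
     (p.2.2.2, 100 * a ^ 2 / p.2.2.1 ^ 3 - 25 / p.2.2.1 ^ 2
        - 200 * p.2.2.1 / Real.sqrt (p.2.2.1 ^ 2 + 4 * p.1 ^ 2) ^ 3))) with hVdef
  set y : ℝ → ℝ × ℝ × ℝ × ℝ :=
    fun t => (F (T + t), (deriv F (T + t), (R (T + t), deriv R (T + t)))) with hydef
  set z : ℝ → ℝ × ℝ × ℝ × ℝ :=
    fun t => (F (T - t), (-(deriv F (T - t)), (R (T - t), -(deriv R (T - t))))) with hzdef
  have hadd : ∀ t : ℝ, HasDerivAt (fun u : ℝ => T + u) 1 t :=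
    fun t => (hasDerivAt_id t).const_add T
  have hsub : ∀ t : ℝ, HasDerivAt (fun u : ℝ => T - u) (-1) t :=
    fun t => (hasDerivAt_id t).const_sub T
  have hyD : ∀ t, HasDerivAt y (V (y t)) t := by
    intro t
    have h1 := (hF1 (T + t)).comp t (hadd t)
    have h2 := (hF2' (T + t)).comp t (hadd t)
    have h3 := (hR1 (T + t)).comp t (hadd t)
    have h4 := (hR2' (T + t)).comp t (hadd t)
    simp only [mul_one] at h1 h2 h3 h4
    have hprod := h1.prodMk (h2.prodMk (h3.prodMk h4))
    have e : V (y t)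
        = (deriv F (T + t), (deriv (deriv F) (T + t),
            (deriv R (T + t), deriv (deriv R) (T + t)))) := by
      simp only [hVdef, hydef, hFode, hRode]
    rw [e]
    exact hprod
  have hzD : ∀ t, HasDerivAt z (V (z t)) t := by
    intro t
    have h1 := (hF1 (T - t)).comp t (hsub t)
    have h2 := ((hF2' (T - t)).comp t (hsub t)).neg
    have h3 := (hR1 (T - t)).comp t (hsub t)
    have h4 := ((hR2' (T - t)).comp t (hsub t)).neg
    simp only [mul_neg, mul_one, neg_neg] at h1 h2 h3 h4
    have hprod := h1.prodMk (h2.prodMk (h3.prodMk h4))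
    have e : V (z t)
        = (-(deriv F (T - t)), (deriv (deriv F) (T - t),
            (-(deriv R (T - t)), deriv (deriv R) (T - t)))) := by
      simp only [hVdef, hzdef, hFode, hRode]
    rw [e]
    exact hprod
  have hinit : y 0 = z 0 := by
    simp [hydef, hzdef, hFT, hRT]
  have hVsmooth : ∀ p : ℝ × ℝ × ℝ × ℝ, 0 < p.2.2.1 → ContDiffAt ℝ 1 V p := by
    intro p hp
    have hq : (0 : ℝ) < p.2.2.1 ^ 2 + 4 * p.1 ^ 2 := by positivity
    have hinner : ContDiffAt ℝ 1 (fun p : ℝ × ℝ × ℝ × ℝ => p.2.2.1 ^ 2 + 4 * p.1 ^ 2) p := by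
      fun_prop
    have hsqrt : ContDiffAt ℝ 1
        (fun p : ℝ × ℝ × ℝ × ℝ => Real.sqrt (p.2.2.1 ^ 2 + 4 * p.1 ^ 2) ^ 3) p :=
      ((Real.contDiffAt_sqrt (ne_of_gt hq)).comp p hinner).pow 3
    have hs3 : Real.sqrt (p.2.2.1 ^ 2 + 4 * p.1 ^ 2) ^ 3 ≠ 0 :=
      pow_ne_zero _ (ne_of_gt (Real.sqrt_pos.mpr hq))
    have c1 : ContDiffAt ℝ 1 (fun p : ℝ × ℝ × ℝ × ℝ => p.2.1) p := by fun_prop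
    have c2 : ContDiffAt ℝ 1
        (fun p : ℝ × ℝ × ℝ × ℝ =>
          -400 * p.1 / Real.sqrt (p.2.2.1 ^ 2 + 4 * p.1 ^ 2) ^ 3) p :=
      ContDiffAt.div (by fun_prop) hsqrt hs3
    have c3 : ContDiffAt ℝ 1 (fun p : ℝ × ℝ × ℝ × ℝ => p.2.2.2) p := by fun_prop
    have hr3 : p.2.2.1 ^ 3 ≠ 0 := pow_ne_zero _ (ne_of_gt hp)
    have hr2 : p.2.2.1 ^ 2 ≠ 0 := pow_ne_zero _ (ne_of_gt hp)
    have c4 : ContDiffAt ℝ 1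
        (fun p : ℝ × ℝ × ℝ × ℝ =>
          100 * a ^ 2 / p.2.2.1 ^ 3 - 25 / p.2.2.1 ^ 2
            - 200 * p.2.2.1 / Real.sqrt (p.2.2.1 ^ 2 + 4 * p.1 ^ 2) ^ 3) p := by
      refine ContDiffAt.sub (ContDiffAt.sub ?_ ?_) ?_
      · exact ContDiffAt.div (by fun_prop) (by fun_prop) hr3
      · exact ContDiffAt.div (by fun_prop) (by fun_prop) hr2
      · exact ContDiffAt.div (by fun_prop) hsqrt hs3
    exact c1.prodMk (c2.prodMk (c3.prodMk c4))
  have key : {t : ℝ | y t = z t} = univ := by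
    apply IsClopen.eq_univ
    · constructor
      · exact isClosed_eq (continuous_iff_continuousAt.mpr fun t => (hyD t).continuousAt)
          (continuous_iff_continuousAt.mpr fun t => (hzD t).continuousAt)
      · rw [isOpen_iff_mem_nhds]
        intro t₀ ht₀
        obtain ⟨K, s, hs, hKs⟩ :=
          (hVsmooth (y t₀) (by simpa [hydef] using hRpos (T + t₀))).exists_lipschitzOnWith
        have hy_ev : ∀ᶠ t in 𝓝 t₀, y t ∈ s :=
          (hyD t₀).continuousAt.preimage_mem_nhds hs
        have hz_ev : ∀ᶠ t in 𝓝 t₀, z t ∈ s :=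
          (hzD t₀).continuousAt.preimage_mem_nhds
            (by rwa [show z t₀ = y t₀ from ht₀.symm])
        exact ODE_solution_unique_of_eventually (v := fun _ => V) (s := fun _ => s)
          (Filter.Eventually.of_forall fun _ => hKs)
          (hy_ev.mono fun t ht => ⟨hyD t, ht⟩)
          (hz_ev.mono fun t ht => ⟨hzD t, ht⟩) ht₀
    · exact ⟨0, hinit⟩
  intro t
  have ht : y t = z t := by
    have : t ∈ ({t : ℝ | y t = z t}) := key ▸ mem_univ t
    exact this
  constructor
  · simpa [hydef, hzdef] using congrArg Prod.fst ht
  · simpa [hydef, hzdef] using congrArg (fun p : ℝ × ℝ × ℝ × ℝ => p.2.2.1) ht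
end

section
/- If T ∈ ℝ satisfies F(T) = 0 and R'(T) = 0, then for all t ∈ ℝ one has F(T + t) = −F(T − t) and R(T + t) = R(T − t); that is, F is odd about t = T and R is even about t = T. -/
open Set

noncomputable def vf (a : ℝ) : (ℝ × ℝ × ℝ × ℝ) → (ℝ × ℝ × ℝ × ℝ) := fun x =>
  (x.2.1, -400 * x.1 / Real.sqrt (x.2.2.1 ^ 2 + 4 * x.1 ^ 2) ^ 3, x.2.2.2,
   100 * a ^ 2 / x.2.2.1 ^ 3 - 25 / x.2.2.1 ^ 2
     - 200 * x.2.2.1 / Real.sqrt (x.2.2.1 ^ 2 + 4 * x.1 ^ 2) ^ 3)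

lemma contDiffAt_vf (a : ℝ) (x : ℝ × ℝ × ℝ × ℝ) (hx : 0 < x.2.2.1) :
    ContDiffAt ℝ 1 (vf a) x := by
  have hp1 : ContDiffAt ℝ 1 (fun y : ℝ × ℝ × ℝ × ℝ => y.1) x := contDiffAt_fst
  have hp2 : ContDiffAt ℝ 1 (fun y : ℝ × ℝ × ℝ × ℝ => y.2.1) x :=
    contDiffAt_fst.comp x contDiffAt_snd
  have hp3 : ContDiffAt ℝ 1 (fun y : ℝ × ℝ × ℝ × ℝ => y.2.2.1) x :=
    contDiffAt_fst.comp x (contDiffAt_snd.comp x contDiffAt_snd)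
  have hp4 : ContDiffAt ℝ 1 (fun y : ℝ × ℝ × ℝ × ℝ => y.2.2.2) x :=
    contDiffAt_snd.comp x (contDiffAt_snd.comp x contDiffAt_snd)
  have hq : ContDiffAt ℝ 1 (fun y : ℝ × ℝ × ℝ × ℝ => y.2.2.1 ^ 2 + 4 * y.1 ^ 2) x :=
    (hp3.pow 2).add ((contDiffAt_const (c := (4:ℝ))).mul (hp1.pow 2))
  have hqpos : 0 < x.2.2.1 ^ 2 + 4 * x.1 ^ 2 := by positivity
  have hs : ContDiffAt ℝ 1 (fun y : ℝ × ℝ × ℝ × ℝ =>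
      Real.sqrt (y.2.2.1 ^ 2 + 4 * y.1 ^ 2)) x :=
    hq.sqrt (ne_of_gt hqpos)
  have hsne : Real.sqrt (x.2.2.1 ^ 2 + 4 * x.1 ^ 2) ^ 3 ≠ 0 := by
    positivity
  have hxne : x.2.2.1 ≠ 0 := ne_of_gt hx
  refine ContDiffAt.prodMk hp2 (ContDiffAt.prodMk ?_ (ContDiffAt.prodMk hp4 ?_))
  · exact (((contDiffAt_const (c := (-400:ℝ))).mul hp1).div (hs.pow 3) hsne)
  · refine ContDiffAt.sub (ContDiffAt.sub ?_ ?_) ?_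
    · exact (contDiffAt_const (c := 100 * a ^ 2)).div (hp3.pow 3) (by positivity)
    · exact (contDiffAt_const (c := (25:ℝ))).div (hp3.pow 2) (by positivity)
    · exact (((contDiffAt_const (c := (200:ℝ))).mul hp3).div (hs.pow 3) hsne)

lemma vf_lipschitz (a r M : ℝ) (hr : 0 < r) :
    ∃ K : NNReal, LipschitzOnWith K (vf a)
      (Icc (-M) M ×ˢ Icc (-M) M ×ˢ Icc r M ×ˢ Icc (-M) M) := by
  set s : Set (ℝ × ℝ × ℝ × ℝ) := Icc (-M) M ×ˢ Icc (-M) M ×ˢ Icc r M ×ˢ Icc (-M) M with hs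
  have hU : IsOpen {x : ℝ × ℝ × ℝ × ℝ | 0 < x.2.2.1} :=
    isOpen_lt continuous_const (continuous_fst.comp (continuous_snd.comp continuous_snd))
  have hsub : s ⊆ {x : ℝ × ℝ × ℝ × ℝ | 0 < x.2.2.1} := by
    rintro ⟨x1, x2, x3, x4⟩ hx
    exact lt_of_lt_of_le hr hx.2.2.1.1
  have hcd : ContDiffOn ℝ 1 (vf a) {x : ℝ × ℝ × ℝ × ℝ | 0 < x.2.2.1} :=
    fun x hx => (contDiffAt_vf a x hx).contDiffWithinAt
  have hfc : ContinuousOn (fun x => fderiv ℝ (vf a) x) {x : ℝ × ℝ × ℝ × ℝ | 0 < x.2.2.1} :=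
    hcd.continuousOn_fderiv_of_isOpen hU le_rfl
  have hcomp : IsCompact s :=
    (isCompact_Icc.prod (isCompact_Icc.prod (isCompact_Icc.prod isCompact_Icc)))
  obtain ⟨C, hC⟩ := hcomp.exists_bound_of_continuousOn (hfc.mono hsub)
  refine ⟨⟨max C 0, le_max_right _ _⟩, ?_⟩
  apply Convex.lipschitzOnWith_of_nnnorm_hasFDerivWithin_le
    (f' := fun x => fderiv ℝ (vf a) x)
    (fun x hx => (((contDiffAt_vf a x (hsub hx)).differentiableAt
      one_ne_zero).hasFDerivAt).hasFDerivWithinAt)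
    ?_
    ((convex_Icc _ _).prod ((convex_Icc _ _).prod ((convex_Icc _ _).prod (convex_Icc _ _))))
  intro x hx
  have h1 : ‖fderiv ℝ (vf a) x‖ ≤ max C 0 := (hC x hx).trans (le_max_left _ _)
  exact_mod_cast h1

/-- if `F T = 0` and `R' T = 0`, then `F` is odd about `t = T`
and `R` is even about `t = T`. -/
theorem odd_even_symmetry_about_T
    (a b : ℝ) (F R : ℝ → ℝ)
    (hF : ContDiff ℝ 2 F) (hR : ContDiff ℝ 2 R)
    (hRpos : ∀ t, 0 < R t)
    (hFode : ∀ t, deriv (deriv F) t =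
      -400 * F t / Real.sqrt (R t ^ 2 + 4 * F t ^ 2) ^ 3)
    (hRode : ∀ t, deriv (deriv R) t =
      100 * a ^ 2 / R t ^ 3 - 25 / R t ^ 2
        - 200 * R t / Real.sqrt (R t ^ 2 + 4 * F t ^ 2) ^ 3)
    (T : ℝ) (hFT : F T = 0) (hRT : deriv R T = 0) :
    ∀ t : ℝ, F (T + t) = -F (T - t) ∧ R (T + t) = R (T - t) := by
  -- basic differentiability facts
  have hFd : Differentiable ℝ F := hF.differentiable two_ne_zero
  have hRd : Differentiable ℝ R := hR.differentiable two_ne_zero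
  have hF2 : ContDiff ℝ (1 + 1) F := by exact_mod_cast hF
  have hR2 : ContDiff ℝ (1 + 1) R := by exact_mod_cast hR
  have hF1 : ContDiff ℝ 1 (deriv F) := (contDiff_succ_iff_deriv.mp hF2).2.2
  have hR1 : ContDiff ℝ 1 (deriv R) := (contDiff_succ_iff_deriv.mp hR2).2.2
  have hF'' : ∀ u, HasDerivAt (deriv F) (deriv (deriv F) u) u :=
    fun u => ((hF1.differentiable one_ne_zero) u).hasDerivAt
  have hR'' : ∀ u, HasDerivAt (deriv R) (deriv (deriv R) u) u :=
    fun u => ((hR1.differentiable one_ne_zero) u).hasDerivAt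
  set f : ℝ → ℝ × ℝ × ℝ × ℝ := fun u => (F u, deriv F u, R u, deriv R u) with hfdef
  set g : ℝ → ℝ × ℝ × ℝ × ℝ :=
    fun u => (-F (2*T - u), deriv F (2*T - u), R (2*T - u), -deriv R (2*T - u)) with hgdef
  -- f solves the ODE
  have hfd : ∀ u, HasDerivAt f (vf a (f u)) u := by
    intro u
    have h := (HasDerivAt.prodMk (hFd u).hasDerivAt (HasDerivAt.prodMk (hF'' u) (HasDerivAt.prodMk ((hRd u).hasDerivAt) (hR'' u))))
    have e : vf a (f u) =
        (deriv F u, deriv (deriv F) u, deriv R u, deriv (deriv R) u) := by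
      simp only [vf, hfdef]
      rw [hFode u, hRode u]
    rw [e]; exact h
  -- g solves the ODE
  have hgd : ∀ u, HasDerivAt g (vf a (g u)) u := by
    intro u
    have hσ : HasDerivAt (fun u : ℝ => 2*T - u) (-1) u := by
      simpa using (hasDerivAt_id u).const_sub (2*T)
    have h1 : HasDerivAt (fun u : ℝ => F (2*T - u)) (deriv F (2*T - u) * (-1)) u :=
      HasDerivAt.comp u ((hFd (2*T - u)).hasDerivAt) hσ
    have h2 : HasDerivAt (fun u : ℝ => deriv F (2*T - u))
        (deriv (deriv F) (2*T - u) * (-1)) u := HasDerivAt.comp u (hF'' (2*T - u)) hσ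
    have h3 : HasDerivAt (fun u : ℝ => R (2*T - u)) (deriv R (2*T - u) * (-1)) u :=
      HasDerivAt.comp u ((hRd (2*T - u)).hasDerivAt) hσ
    have h4 : HasDerivAt (fun u : ℝ => deriv R (2*T - u))
        (deriv (deriv R) (2*T - u) * (-1)) u := HasDerivAt.comp u (hR'' (2*T - u)) hσ
    have h := HasDerivAt.prodMk (h1.neg) (HasDerivAt.prodMk h2 (HasDerivAt.prodMk h3 h4.neg))
    have e : vf a (g u) =
        (-(deriv F (2*T - u) * (-1)), deriv (deriv F) (2*T - u) * (-1),
         deriv R (2*T - u) * (-1), -(deriv (deriv R) (2*T - u) * (-1))) := by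
      simp only [vf, hgdef, neg_sq]
      rw [hFode, hRode]
      simp only [Prod.mk.injEq]
      refine ⟨by ring, by ring, by ring, by ring⟩
    rw [e]; exact h
  intro t
  set c : ℝ := |t| + 1 with hc
  have hc0 : 0 < c := by positivity
  -- bounds on the compact interval
  have hIc : IsCompact (Icc (T - c) (T + c)) := isCompact_Icc
  have hne : (Icc (T - c) (T + c)).Nonempty := ⟨T, by constructor <;> linarith⟩
  obtain ⟨M1, hM1⟩ := hIc.exists_bound_of_continuousOn hF.continuous.continuousOn
  obtain ⟨M2, hM2⟩ := hIc.exists_bound_of_continuousOn hF1.continuous.continuousOn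
  obtain ⟨M3, hM3⟩ := hIc.exists_bound_of_continuousOn hR.continuous.continuousOn
  obtain ⟨M4, hM4⟩ := hIc.exists_bound_of_continuousOn hR1.continuous.continuousOn
  obtain ⟨u0, hu0mem, hu0min⟩ := hIc.exists_isMinOn hne hR.continuous.continuousOn
  set r : ℝ := R u0 with hrdef
  have hr0 : 0 < r := hRpos u0
  set M : ℝ := max (max M1 M2) (max M3 M4) with hM
  have hbF : ∀ u ∈ Icc (T - c) (T + c), |F u| ≤ M := fun u hu => by
    have := hM1 u hu; rw [Real.norm_eq_abs] at this
    exact this.trans ((le_max_left _ _).trans (le_max_left _ _))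
  have hbF' : ∀ u ∈ Icc (T - c) (T + c), |deriv F u| ≤ M := fun u hu => by
    have := hM2 u hu; rw [Real.norm_eq_abs] at this
    exact this.trans ((le_max_right _ _).trans (le_max_left _ _))
  have hbR : ∀ u ∈ Icc (T - c) (T + c), |R u| ≤ M := fun u hu => by
    have := hM3 u hu; rw [Real.norm_eq_abs] at this
    exact this.trans ((le_max_left _ _).trans (le_max_right _ _))
  have hbR' : ∀ u ∈ Icc (T - c) (T + c), |deriv R u| ≤ M := fun u hu => by
    have := hM4 u hu; rw [Real.norm_eq_abs] at this
    exact this.trans ((le_max_right _ _).trans (le_max_right _ _))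
  have hbRlo : ∀ u ∈ Icc (T - c) (T + c), r ≤ R u := fun u hu => hu0min hu
  set sset : Set (ℝ × ℝ × ℝ × ℝ) := Icc (-M) M ×ˢ Icc (-M) M ×ˢ Icc r M ×ˢ Icc (-M) M
    with hsset
  obtain ⟨K, hK⟩ := vf_lipschitz a r M hr0
  have hrefl : ∀ u ∈ Icc (T - c) (T + c), 2*T - u ∈ Icc (T - c) (T + c) := by
    intro u hu
    exact ⟨by linarith [hu.2], by linarith [hu.1]⟩
  have hfs : ∀ u ∈ Ioo (T - c) (T + c), f u ∈ sset := by
    intro u hu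
    have hu' : u ∈ Icc (T - c) (T + c) := Ioo_subset_Icc_self hu
    simp only [hfdef]
    exact ⟨abs_le.mp (hbF u hu'), abs_le.mp (hbF' u hu'),
      ⟨hbRlo u hu', le_of_abs_le (hbR u hu')⟩, abs_le.mp (hbR' u hu')⟩
  have hgs : ∀ u ∈ Ioo (T - c) (T + c), g u ∈ sset := by
    intro u hu
    have hu' : 2*T - u ∈ Icc (T - c) (T + c) := hrefl u (Ioo_subset_Icc_self hu)
    simp only [hgdef]
    have h1 := abs_le.mp (hbF _ hu')
    have h4 := abs_le.mp (hbR' _ hu')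
    exact ⟨⟨show -M ≤ -F (2*T - u) by linarith [h1.2], show -F (2*T - u) ≤ M by linarith [h1.1]⟩,
      abs_le.mp (hbF' _ hu'), ⟨hbRlo _ hu', le_of_abs_le (hbR _ hu')⟩,
      ⟨show -M ≤ -deriv R (2*T - u) by linarith [h4.2],
       show -deriv R (2*T - u) ≤ M by linarith [h4.1]⟩⟩
  have hTmem : T ∈ Ioo (T - c) (T + c) := ⟨by linarith, by linarith⟩
  have heq : f T = g T := by
    have h2T : 2*T - T = T := by ring
    simp only [hfdef, hgdef, h2T, hFT, hRT, neg_zero]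
  have hfc : ContinuousOn f (Icc (T - c) (T + c)) :=
    (hF.continuous.prodMk (hF1.continuous.prodMk
      (hR.continuous.prodMk hR1.continuous))).continuousOn
  have hgc : ContinuousOn g (Icc (T - c) (T + c)) := by
    have hσc : Continuous (fun u : ℝ => 2*T - u) := continuous_const.sub continuous_id
    exact (((hF.continuous.comp hσc).neg).prodMk
      (((hF1.continuous.comp hσc)).prodMk
      ((hR.continuous.comp hσc).prodMk ((hR1.continuous.comp hσc).neg)))).continuousOn
  have huniq := ODE_solution_unique_of_mem_Icc
    (v := fun _ => vf a) (s := fun _ => sset) (K := K)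
    (fun _ _ => hK) hTmem hfc (fun u _ => hfd u) hfs hgc (fun u _ => hgd u) hgs heq
  have heval : f (T + t) = g (T + t) := huniq ⟨by linarith [neg_abs_le t],
    by linarith [le_abs_self t]⟩
  have h2 : 2*T - (T + t) = T - t := by ring
  rw [hfdef, hgdef] at heval
  simp only [h2, Prod.mk.injEq] at heval
  exact ⟨heval.1, heval.2.2.1⟩
end

section
/- Assume F(0) = 0 and R'(0) = 0. Then for all t ∈ ℝ one has F(−t) = −F(t) and R(−t) = R(t); that is, F is an odd function and R is an even function. -/
open Set

/-- if `F 0 = 0` and `R' 0 = 0`, then `F` is odd and `R` is even. -/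
theorem F_odd_R_even
    (a b : ℝ) (F R : ℝ → ℝ)
    (hF : ContDiff ℝ 2 F) (hR : ContDiff ℝ 2 R)
    (hRpos : ∀ t, 0 < R t)
    (hFode : ∀ t, deriv (deriv F) t =
      -400 * F t / Real.sqrt (R t ^ 2 + 4 * F t ^ 2) ^ 3)
    (hRode : ∀ t, deriv (deriv R) t =
      100 * a ^ 2 / R t ^ 3 - 25 / R t ^ 2
        - 200 * R t / Real.sqrt (R t ^ 2 + 4 * F t ^ 2) ^ 3)
    (hF0 : F 0 = 0) (hR0 : deriv R 0 = 0) :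
    ∀ t : ℝ, F (-t) = -F t ∧ R (-t) = R t := by
  have h2 : (2 : WithTop ℕ∞) = 1 + 1 := by norm_num
  rw [h2, contDiff_succ_iff_deriv] at hF hR
  obtain ⟨hFd, -, hF1⟩ := hF
  obtain ⟨hRd, -, hR1⟩ := hR
  have hFd' : Differentiable ℝ (deriv F) := hF1.differentiable one_ne_zero
  have hRd' : Differentiable ℝ (deriv R) := hR1.differentiable one_ne_zero
  -- the state and vector field
  set v : ℝ × ℝ × ℝ × ℝ → ℝ × ℝ × ℝ × ℝ := fun x =>
    (x.2.1, -400 * x.1 / Real.sqrt (x.2.2.1 ^ 2 + 4 * x.1 ^ 2) ^ 3,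
     x.2.2.2, 100 * a ^ 2 / x.2.2.1 ^ 3 - 25 / x.2.2.1 ^ 2
        - 200 * x.2.2.1 / Real.sqrt (x.2.2.1 ^ 2 + 4 * x.1 ^ 2) ^ 3) with hv_def
  set G : ℝ → ℝ × ℝ × ℝ × ℝ := fun t => (F t, deriv F t, R t, deriv R t) with hG_def
  set H : ℝ → ℝ × ℝ × ℝ × ℝ :=
    fun t => (-F (-t), deriv F (-t), R (-t), -deriv R (-t)) with hH_def
  -- G solves the ODE
  have hG' : ∀ t, HasDerivAt G (v (G t)) t := by
    intro t
    have h1 : HasDerivAt F (deriv F t) t := (hFd t).hasDerivAt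
    have h2 : HasDerivAt (deriv F) (deriv (deriv F) t) t := (hFd' t).hasDerivAt
    have h3 : HasDerivAt R (deriv R t) t := (hRd t).hasDerivAt
    have h4 : HasDerivAt (deriv R) (deriv (deriv R) t) t := (hRd' t).hasDerivAt
    have := h1.prodMk (h2.prodMk (h3.prodMk h4))
    rw [hFode t, hRode t] at this
    exact this
  -- H solves the ODE
  have hH' : ∀ t, HasDerivAt H (v (H t)) t := by
    intro t
    have hneg : HasDerivAt (fun s : ℝ => -s) (-1 : ℝ) t := by
      simpa using (hasDerivAt_neg t)
    have h1 : HasDerivAt (fun s => -F (-s)) (deriv F (-t)) t := by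
      have := (((hFd (-t)).hasDerivAt.comp t hneg)).neg
      exact this.congr_deriv (by ring)
    have h2 : HasDerivAt (fun s => deriv F (-s)) (deriv (deriv F) (-t) * (-1)) t :=
      (hFd' (-t)).hasDerivAt.comp t hneg
    have h3 : HasDerivAt (fun s => R (-s)) (deriv R (-t) * (-1)) t :=
      (hRd (-t)).hasDerivAt.comp t hneg
    have h4 : HasDerivAt (fun s => -deriv R (-s)) (deriv (deriv R) (-t)) t := by
      have := ((hRd' (-t)).hasDerivAt.comp t hneg).neg
      exact this.congr_deriv (by ring)
    have hkey := h1.prodMk (h2.prodMk (h3.prodMk h4))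
    rw [hFode (-t), hRode (-t)] at hkey
    have : v (H t) = (deriv F (-t),
        -400 * F (-t) / Real.sqrt (R (-t) ^ 2 + 4 * F (-t) ^ 2) ^ 3 * (-1),
        deriv R (-t) * (-1),
        100 * a ^ 2 / R (-t) ^ 3 - 25 / R (-t) ^ 2
          - 200 * R (-t) / Real.sqrt (R (-t) ^ 2 + 4 * F (-t) ^ 2) ^ 3) := by
      simp only [hv_def, hH_def, neg_sq]
      refine Prod.ext rfl (Prod.ext (by show _ = _; ring) (Prod.ext (by show _ = _; ring) rfl))
    rw [this]
    exact hkey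
  -- continuity
  have hGc : Continuous G :=
    (hFd.continuous.prodMk (hFd'.continuous.prodMk
      (hRd.continuous.prodMk hRd'.continuous)))
  have hHc : Continuous H := by
    have : Continuous (fun s : ℝ => -s) := continuous_neg
    exact ((hFd.continuous.comp this).neg.prodMk
      ((hFd'.continuous.comp this).prodMk
      ((hRd.continuous.comp this).prodMk (hRd'.continuous.comp this).neg)))
  -- the vector field is C¹ near any point with positive R-coordinate
  have hvC1 : ∀ x : ℝ × ℝ × ℝ × ℝ, 0 < x.2.2.1 → ContDiffAt ℝ 1 v x := by
    intro x hx
    have hq : ContDiff ℝ 1 (fun y : ℝ × ℝ × ℝ × ℝ => y.2.2.1 ^ 2 + 4 * y.1 ^ 2) := by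
      fun_prop
    have hqpos : 0 < x.2.2.1 ^ 2 + 4 * x.1 ^ 2 := by positivity
    have hsq : ContDiffAt ℝ 1
        (fun y : ℝ × ℝ × ℝ × ℝ => Real.sqrt (y.2.2.1 ^ 2 + 4 * y.1 ^ 2) ^ 3) x :=
      ((hq.contDiffAt).sqrt hqpos.ne').pow 3
    have hsqne : Real.sqrt (x.2.2.1 ^ 2 + 4 * x.1 ^ 2) ^ 3 ≠ 0 := by
      positivity
    refine ContDiffAt.prodMk ?_ (ContDiffAt.prodMk ?_ (ContDiffAt.prodMk ?_ ?_))
    · exact (contDiff_fst.comp contDiff_snd).contDiffAt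
    · exact ContDiffAt.div (by fun_prop) hsq hsqne
    · exact (contDiff_snd.comp (contDiff_snd.comp contDiff_snd)).contDiffAt
    · have h1 : ContDiffAt ℝ 1
          (fun y : ℝ × ℝ × ℝ × ℝ => 100 * a ^ 2 / y.2.2.1 ^ 3) x := by
        refine ContDiffAt.div (by fun_prop) (by fun_prop) (by positivity)
      have h2 : ContDiffAt ℝ 1
          (fun y : ℝ × ℝ × ℝ × ℝ => 25 / y.2.2.1 ^ 2) x := by
        refine ContDiffAt.div (by fun_prop) (by fun_prop) (by positivity)
      have h3 : ContDiffAt ℝ 1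
          (fun y : ℝ × ℝ × ℝ × ℝ =>
            200 * y.2.2.1 / Real.sqrt (y.2.2.1 ^ 2 + 4 * y.1 ^ 2) ^ 3) x :=
        ContDiffAt.div (by fun_prop) hsq hsqne
      exact (h1.sub h2).sub h3
  -- the set where the two solutions agree is clopen
  set A : Set ℝ := {t | G t = H t} with hA_def
  have hA0 : (0 : ℝ) ∈ A := by
    simp only [hA_def, hG_def, hH_def, mem_setOf_eq, neg_zero, hF0, hR0]
  have hAclosed : IsClosed A := isClosed_eq hGc hHc
  have hAopen : IsOpen A := by
    rw [isOpen_iff_mem_nhds]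
    intro t₀ ht₀
    have hGt₀ : 0 < (G t₀).2.2.1 := hRpos t₀
    obtain ⟨K, s₀, hs₀, hlip⟩ := (hvC1 (G t₀) hGt₀).exists_lipschitzOnWith
    have heq : G t₀ = H t₀ := ht₀
    have hfe : ∀ᶠ t in nhds t₀, HasDerivAt G (v (G t)) t ∧ G t ∈ s₀ := by
      have : ∀ᶠ t in nhds t₀, G t ∈ s₀ := hGc.continuousAt.preimage_mem_nhds hs₀
      filter_upwards [this] with t ht using ⟨hG' t, ht⟩
    have hge : ∀ᶠ t in nhds t₀, HasDerivAt H (v (H t)) t ∧ H t ∈ s₀ := by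
      have hs₀' : s₀ ∈ nhds (H t₀) := heq ▸ hs₀
      have : ∀ᶠ t in nhds t₀, H t ∈ s₀ := hHc.continuousAt.preimage_mem_nhds hs₀'
      filter_upwards [this] with t ht using ⟨hH' t, ht⟩
    have := ODE_solution_unique_of_eventually (v := fun _ => v) (s := fun _ => s₀)
      (Filter.Eventually.of_forall fun _ => hlip) hfe hge heq
    exact this.mono fun t ht => ht
  have hAuniv : A = univ := IsClopen.eq_univ ⟨hAclosed, hAopen⟩ ⟨0, hA0⟩
  intro t
  have ht : G t = H t := by
    have : t ∈ A := hAuniv ▸ mem_univ t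
    exact this
  have h1 : F t = -F (-t) := congrArg Prod.fst ht
  have h3 : R t = R (-t) := congrArg (fun x => x.2.2.1) ht
  constructor
  · linarith
  · exact h3.symm
end

section
/- Assume F(0) = 0 and R'(0) = 0. If T ∈ ℝ satisfies F'(T) = 0 and R'(T) = 0, then F and R are periodic with period 4T: for all t ∈ ℝ, F(t + 4T) = F(t) and R(t + 4T) = R(t). -/
open Set Filter Topology

noncomputable def odeVF (a : ℝ) : ℝ × ℝ × ℝ × ℝ → ℝ × ℝ × ℝ × ℝ := fun p =>
  (p.2.1,
   -400 * p.1 / Real.sqrt (p.2.2.1 ^ 2 + 4 * p.1 ^ 2) ^ 3,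
   p.2.2.2,
   100 * a ^ 2 / p.2.2.1 ^ 3 - 25 / p.2.2.1 ^ 2
     - 200 * p.2.2.1 / Real.sqrt (p.2.2.1 ^ 2 + 4 * p.1 ^ 2) ^ 3)

lemma odeVF_contDiffAt (a : ℝ) (p : ℝ × ℝ × ℝ × ℝ) (hp : 0 < p.2.2.1) :
    ContDiffAt ℝ 1 (odeVF a) p := by
  have cF : ContDiffAt ℝ 1 (fun q : ℝ × ℝ × ℝ × ℝ => q.1) p := contDiffAt_fst
  have cF' : ContDiffAt ℝ 1 (fun q : ℝ × ℝ × ℝ × ℝ => q.2.1) p :=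
    contDiffAt_fst.comp p contDiffAt_snd
  have cR : ContDiffAt ℝ 1 (fun q : ℝ × ℝ × ℝ × ℝ => q.2.2.1) p :=
    contDiffAt_fst.comp p (contDiffAt_snd.comp p contDiffAt_snd)
  have cR' : ContDiffAt ℝ 1 (fun q : ℝ × ℝ × ℝ × ℝ => q.2.2.2) p :=
    contDiffAt_snd.comp p (contDiffAt_snd.comp p contDiffAt_snd)
  have harg : ContDiffAt ℝ 1 (fun q : ℝ × ℝ × ℝ × ℝ => q.2.2.1 ^ 2 + 4 * q.1 ^ 2) p :=
    (cR.pow 2).add ((contDiffAt_const (c := (4:ℝ))).mul (cF.pow 2))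
  have hargpos : 0 < p.2.2.1 ^ 2 + 4 * p.1 ^ 2 := by positivity
  have hS : ContDiffAt ℝ 1 (fun q : ℝ × ℝ × ℝ × ℝ =>
      Real.sqrt (q.2.2.1 ^ 2 + 4 * q.1 ^ 2)) p :=
    (Real.contDiffAt_sqrt hargpos.ne').comp p harg
  have hSpos : 0 < Real.sqrt (p.2.2.1 ^ 2 + 4 * p.1 ^ 2) := Real.sqrt_pos.mpr hargpos
  have hS3 : ContDiffAt ℝ 1 (fun q : ℝ × ℝ × ℝ × ℝ =>
      Real.sqrt (q.2.2.1 ^ 2 + 4 * q.1 ^ 2) ^ 3) p := hS.pow 3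
  have hS3ne : Real.sqrt (p.2.2.1 ^ 2 + 4 * p.1 ^ 2) ^ 3 ≠ 0 := by positivity
  refine cF'.prodMk (ContDiffAt.prodMk ?_ (cR'.prodMk ?_))
  · exact (((contDiffAt_const (c := (-400:ℝ))).mul cF).div hS3 hS3ne)
  · refine ContDiffAt.sub (ContDiffAt.sub ?_ ?_) ?_
    · exact (contDiffAt_const (c := 100 * a ^ 2)).div (cR.pow 3) (by positivity)
    · exact (contDiffAt_const (c := (25:ℝ))).div (cR.pow 2) (by positivity)
    · exact (((contDiffAt_const (c := (200:ℝ))).mul cR).div hS3 hS3ne)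

lemma ode_unique_global {E : Type*} [NormedAddCommGroup E] [NormedSpace ℝ E]
    (v : E → E) (γ γ' : ℝ → E)
    (hv : ∀ t, ContDiffAt ℝ 1 v (γ t))
    (hγ : ∀ t, HasDerivAt γ (v (γ t)) t)
    (hγ' : ∀ t, HasDerivAt γ' (v (γ' t)) t)
    (t₀ : ℝ) (h : γ t₀ = γ' t₀) : ∀ t, γ t = γ' t := by
  have hc : Continuous γ := continuous_iff_continuousAt.mpr fun t => (hγ t).continuousAt
  have hc' : Continuous γ' := continuous_iff_continuousAt.mpr fun t => (hγ' t).continuousAt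
  have hA : IsClopen {t : ℝ | γ t = γ' t} := by
    constructor
    · exact isClosed_eq hc hc'
    · rw [isOpen_iff_mem_nhds]
      intro t₁ ht₁
      obtain ⟨K, s, hs, hlip⟩ := (hv t₁).exists_lipschitzOnWith
      have hs' : s ∈ 𝓝 (γ' t₁) := by rw [show γ' t₁ = γ t₁ from ht₁.symm]; exact hs
      have h1 : ∀ᶠ t in 𝓝 t₁, HasDerivAt γ (v (γ t)) t ∧ γ t ∈ s :=
        (eventually_iff.mpr (hc.continuousAt.preimage_mem_nhds hs)).mono fun t ht => ⟨hγ t, ht⟩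
      have h2 : ∀ᶠ t in 𝓝 t₁, HasDerivAt γ' (v (γ' t)) t ∧ γ' t ∈ s :=
        (eventually_iff.mpr (hc'.continuousAt.preimage_mem_nhds hs')).mono fun t ht => ⟨hγ' t, ht⟩
      have := ODE_solution_unique_of_eventually (v := fun _ x => v x) (s := fun _ => s)
        (Filter.Eventually.of_forall fun _ => hlip) h1 h2 ht₁
      exact this.mono fun t ht => ht
  have huniv := hA.eq_univ (s := {t : ℝ | γ t = γ' t}) ⟨t₀, h⟩
  intro t
  exact (huniv ▸ mem_univ t : t ∈ {t : ℝ | γ t = γ' t})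

/-- odd/even solutions are periodic with period `4 T`. -/
theorem odd_even_periodic
    (a b : ℝ) (F R : ℝ → ℝ)
    (hF : ContDiff ℝ 2 F) (hR : ContDiff ℝ 2 R)
    (hRpos : ∀ t, 0 < R t)
    (hFode : ∀ t, deriv (deriv F) t =
      -400 * F t / Real.sqrt (R t ^ 2 + 4 * F t ^ 2) ^ 3)
    (hRode : ∀ t, deriv (deriv R) t =
      100 * a ^ 2 / R t ^ 3 - 25 / R t ^ 2
        - 200 * R t / Real.sqrt (R t ^ 2 + 4 * F t ^ 2) ^ 3)
    (hF0 : F 0 = 0) (hR0 : deriv R 0 = 0)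
    (T : ℝ) (hFT : deriv F T = 0) (hRT : deriv R T = 0) :
    ∀ t : ℝ, F (t + 4 * T) = F t ∧ R (t + 4 * T) = R t := by
  have h2 : (2 : WithTop ℕ∞) = 1 + 1 := by norm_num
  have hFd := contDiff_succ_iff_deriv.mp (h2 ▸ hF)
  have hRd := contDiff_succ_iff_deriv.mp (h2 ▸ hR)
  have hF1 : ∀ t, HasDerivAt F (deriv F t) t := fun t => (hFd.1 t).hasDerivAt
  have hR1 : ∀ t, HasDerivAt R (deriv R t) t := fun t => (hRd.1 t).hasDerivAt
  have hF2 : ∀ t, HasDerivAt (deriv F) (deriv (deriv F) t) t :=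
    fun t => ((hFd.2.2.differentiable one_ne_zero) t).hasDerivAt
  have hR2 : ∀ t, HasDerivAt (deriv R) (deriv (deriv R) t) t :=
    fun t => ((hRd.2.2.differentiable one_ne_zero) t).hasDerivAt
  set γ₁ : ℝ → ℝ × ℝ × ℝ × ℝ := fun t => (F t, deriv F t, R t, deriv R t) with hγ₁def
  have hvγ₁ : ∀ t, ContDiffAt ℝ 1 (odeVF a) (γ₁ t) := fun t => odeVF_contDiffAt a _ (hRpos t)
  have hder₁ : ∀ t, HasDerivAt γ₁ (odeVF a (γ₁ t)) t := by
    intro t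
    have : odeVF a (γ₁ t) = (deriv F t, deriv (deriv F) t, deriv R t, deriv (deriv R) t) := by
      simp only [odeVF, hγ₁def, hFode t, hRode t]
    rw [this]
    exact (hF1 t).prodMk ((hF2 t).prodMk ((hR1 t).prodMk (hR2 t)))
  -- symmetry about 0
  have hγ₂der : ∀ t, HasDerivAt (fun t : ℝ => (-F (-t), deriv F (-t), R (-t), -deriv R (-t)))
      (odeVF a (-F (-t), deriv F (-t), R (-t), -deriv R (-t))) t := by
    intro t
    have hn : HasDerivAt (fun s : ℝ => -s) (-1) t := hasDerivAt_neg' t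
    have c1 : HasDerivAt (fun t : ℝ => -F (-t)) (-(deriv F (-t) * (-1))) t :=
      (((hF1 (-t)).comp t hn)).neg
    have c2 : HasDerivAt (fun t : ℝ => deriv F (-t)) (deriv (deriv F) (-t) * (-1)) t :=
      (hF2 (-t)).comp t hn
    have c3 : HasDerivAt (fun t : ℝ => R (-t)) (deriv R (-t) * (-1)) t :=
      (hR1 (-t)).comp t hn
    have c4 : HasDerivAt (fun t : ℝ => -deriv R (-t)) (-(deriv (deriv R) (-t) * (-1))) t :=
      ((hR2 (-t)).comp t hn).neg
    have heq : odeVF a (-F (-t), deriv F (-t), R (-t), -deriv R (-t))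
        = (-(deriv F (-t) * (-1)), deriv (deriv F) (-t) * (-1),
           deriv R (-t) * (-1), -(deriv (deriv R) (-t) * (-1))) := by
      simp only [odeVF, hFode (-t), hRode (-t), neg_sq, Prod.mk.injEq]
      refine ⟨by ring, by ring, by ring, by ring⟩
    rw [heq]
    exact c1.prodMk (c2.prodMk (c3.prodMk c4))
  have key0 : ∀ t, γ₁ t = (-F (-t), deriv F (-t), R (-t), -deriv R (-t)) :=
    ode_unique_global (odeVF a) γ₁ _ hvγ₁ hder₁ hγ₂der 0
      (by simp [hγ₁def, hF0, hR0])
  -- symmetry about T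
  have hγ₃der : ∀ t, HasDerivAt (fun t : ℝ => (F (2*T - t), -deriv F (2*T - t), R (2*T - t),
      -deriv R (2*T - t)))
      (odeVF a (F (2*T - t), -deriv F (2*T - t), R (2*T - t), -deriv R (2*T - t))) t := by
    intro t
    have hn : HasDerivAt (fun s : ℝ => 2*T - s) (-1) t := by
      simpa using (hasDerivAt_id t).const_sub (2*T)
    have c1 : HasDerivAt (fun t : ℝ => F (2*T - t)) (deriv F (2*T - t) * (-1)) t :=
      (hF1 (2*T - t)).comp t hn
    have c2 : HasDerivAt (fun t : ℝ => -deriv F (2*T - t))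
        (-(deriv (deriv F) (2*T - t) * (-1))) t := ((hF2 (2*T - t)).comp t hn).neg
    have c3 : HasDerivAt (fun t : ℝ => R (2*T - t)) (deriv R (2*T - t) * (-1)) t :=
      (hR1 (2*T - t)).comp t hn
    have c4 : HasDerivAt (fun t : ℝ => -deriv R (2*T - t))
        (-(deriv (deriv R) (2*T - t) * (-1))) t := ((hR2 (2*T - t)).comp t hn).neg
    have heq : odeVF a (F (2*T - t), -deriv F (2*T - t), R (2*T - t), -deriv R (2*T - t))
        = (deriv F (2*T - t) * (-1), -(deriv (deriv F) (2*T - t) * (-1)),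
           deriv R (2*T - t) * (-1), -(deriv (deriv R) (2*T - t) * (-1))) := by
      simp only [odeVF, hFode (2*T - t), hRode (2*T - t), Prod.mk.injEq]
      refine ⟨by ring, by ring, by ring, by ring⟩
    rw [heq]
    exact c1.prodMk (c2.prodMk (c3.prodMk c4))
  have hTT : 2*T - T = T := by ring
  have keyT : ∀ t, γ₁ t = (F (2*T - t), -deriv F (2*T - t), R (2*T - t), -deriv R (2*T - t)) :=
    ode_unique_global (odeVF a) γ₁ _ hvγ₁ hder₁ hγ₃der T
      (by simp [hγ₁def, hTT, hFT, hRT])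
  have hodd : ∀ t, F (-t) = -F t := fun t => by
    have := congrArg Prod.fst (key0 t); simp [hγ₁def] at this; linarith
  have hRev : ∀ t, R (-t) = R t := fun t => by
    have := congrArg (fun p : ℝ × ℝ × ℝ × ℝ => p.2.2.1) (key0 t)
    simp [hγ₁def] at this; linarith
  have hFr : ∀ t, F (2*T - t) = F t := fun t => by
    have := congrArg Prod.fst (keyT t); simp [hγ₁def] at this; linarith
  have hRr : ∀ t, R (2*T - t) = R t := fun t => by
    have := congrArg (fun p : ℝ × ℝ × ℝ × ℝ => p.2.2.1) (keyT t)
    simp [hγ₁def] at this; linarith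
  intro t
  constructor
  · calc F (t + 4*T) = F (2*T - (t + 4*T)) := (hFr _).symm
    _ = F (-(t + 2*T)) := by congr 1; ring
    _ = -F (t + 2*T) := hodd _
    _ = -F (2*T - (t + 2*T)) := by rw [hFr]
    _ = -F (-t) := by congr 2; ring
    _ = F t := by rw [hodd]; ring
  · calc R (t + 4*T) = R (2*T - (t + 4*T)) := (hRr _).symm
    _ = R (-(t + 2*T)) := by congr 1; ring
    _ = R (t + 2*T) := hRev _
    _ = R (2*T - (t + 2*T)) := by rw [hRr]
    _ = R (-t) := by congr 1; ring
    _ = R t := hRev _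
end

section
/- Assume F(0) = 0 and R'(0) = 0 ('odd/even implies odd'). If T ∈ ℝ satisfies F'(T) = 0 and R'(T) = 0, then F(2T) = 0 and R'(2T) = 0. -/
open Set

/-- The vector field of the first-order system associated to the ODEs. -/
noncomputable def vfield (a : ℝ) (p : ℝ × ℝ × ℝ × ℝ) : ℝ × ℝ × ℝ × ℝ :=
  (p.2.1,
   -400 * p.1 / Real.sqrt (p.2.2.1 ^ 2 + 4 * p.1 ^ 2) ^ 3,
   p.2.2.2,
   100 * a ^ 2 / p.2.2.1 ^ 3 - 25 / p.2.2.1 ^ 2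
     - 200 * p.2.2.1 / Real.sqrt (p.2.2.1 ^ 2 + 4 * p.1 ^ 2) ^ 3)

lemma vfield_contDiffAt (a : ℝ) (p : ℝ × ℝ × ℝ × ℝ) (hp : p.2.2.1 ≠ 0) :
    ContDiffAt ℝ 1 (vfield a) p := by
  have h1 : ContDiffAt ℝ 1 (fun q : ℝ × ℝ × ℝ × ℝ => q.1) p := contDiff_fst.contDiffAt
  have h2 : ContDiffAt ℝ 1 (fun q : ℝ × ℝ × ℝ × ℝ => q.2.1) p :=
    (contDiff_fst.comp contDiff_snd).contDiffAt
  have h3 : ContDiffAt ℝ 1 (fun q : ℝ × ℝ × ℝ × ℝ => q.2.2.1) p :=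
    (contDiff_fst.comp (contDiff_snd.comp contDiff_snd)).contDiffAt
  have h4 : ContDiffAt ℝ 1 (fun q : ℝ × ℝ × ℝ × ℝ => q.2.2.2) p :=
    (contDiff_snd.comp (contDiff_snd.comp contDiff_snd)).contDiffAt
  have hSpos : 0 < p.2.2.1 ^ 2 + 4 * p.1 ^ 2 := by positivity
  have hSin : ContDiffAt ℝ 1 (fun q : ℝ × ℝ × ℝ × ℝ => q.2.2.1 ^ 2 + 4 * q.1 ^ 2) p :=
    (h3.pow 2).add ((contDiffAt_const (c := (4:ℝ))).mul (h1.pow 2))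
  have hS : ContDiffAt ℝ 1
      (fun q : ℝ × ℝ × ℝ × ℝ => Real.sqrt (q.2.2.1 ^ 2 + 4 * q.1 ^ 2) ^ 3) p :=
    (hSin.sqrt hSpos.ne').pow 3
  have hSne : Real.sqrt (p.2.2.1 ^ 2 + 4 * p.1 ^ 2) ^ 3 ≠ 0 := by
    positivity
  refine (h2.prodMk (ContDiffAt.prodMk ?_ (h4.prodMk ?_)))
  · exact ((contDiffAt_const (c := (-400:ℝ))).mul h1).div hS hSne
  · refine ContDiffAt.sub (ContDiffAt.sub ?_ ?_) ?_
    · exact (contDiffAt_const (c := 100 * a ^ 2)).div (h3.pow 3) (pow_ne_zero 3 hp)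
    · exact (contDiffAt_const (c := (25:ℝ))).div (h3.pow 2) (pow_ne_zero 2 hp)
    · exact ((contDiffAt_const (c := (200:ℝ))).mul h3).div hS hSne

/-- odd/even implies odd, i.e. if `F' T = 0` and `R' T = 0`
then `F (2 T) = 0` and `R' (2 T) = 0`. -/
theorem odd_even_implies_odd
    (a b : ℝ) (F R : ℝ → ℝ)
    (hF : ContDiff ℝ 2 F) (hR : ContDiff ℝ 2 R)
    (hRpos : ∀ t, 0 < R t)
    (hFode : ∀ t, deriv (deriv F) t =
      -400 * F t / Real.sqrt (R t ^ 2 + 4 * F t ^ 2) ^ 3)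
    (hRode : ∀ t, deriv (deriv R) t =
      100 * a ^ 2 / R t ^ 3 - 25 / R t ^ 2
        - 200 * R t / Real.sqrt (R t ^ 2 + 4 * F t ^ 2) ^ 3)
    (hF0 : F 0 = 0) (hR0 : deriv R 0 = 0)
    (T : ℝ) (hFT : deriv F T = 0) (hRT : deriv R T = 0) :
    F (2 * T) = 0 ∧ deriv R (2 * T) = 0 := by
  -- basic differentiability facts
  have hF2 : Differentiable ℝ F ∧ ContDiff ℝ 1 (deriv F) := by
    have := contDiff_succ_iff_deriv.mp (show ContDiff ℝ (1 + 1) F from by norm_num; exact hF)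
    exact ⟨this.1, this.2.2⟩
  have hR2 : Differentiable ℝ R ∧ ContDiff ℝ 1 (deriv R) := by
    have := contDiff_succ_iff_deriv.mp (show ContDiff ℝ (1 + 1) R from by norm_num; exact hR)
    exact ⟨this.1, this.2.2⟩
  have hFd : ∀ t, HasDerivAt F (deriv F t) t := fun t => (hF2.1 t).hasDerivAt
  have hRd : ∀ t, HasDerivAt R (deriv R t) t := fun t => (hR2.1 t).hasDerivAt
  have hFd2 : ∀ t, HasDerivAt (deriv F) (deriv (deriv F) t) t :=
    fun t => (hF2.2.differentiable one_ne_zero t).hasDerivAt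
  have hRd2 : ∀ t, HasDerivAt (deriv R) (deriv (deriv R) t) t :=
    fun t => (hR2.2.differentiable one_ne_zero t).hasDerivAt
  -- the two trajectories
  set x : ℝ → ℝ × ℝ × ℝ × ℝ := fun t => (F t, deriv F t, R t, deriv R t) with hxdef
  set y : ℝ → ℝ × ℝ × ℝ × ℝ :=
    fun t => (F (2 * T - t), -deriv F (2 * T - t), R (2 * T - t), -deriv R (2 * T - t)) with hydef
  have hxcont : Continuous x :=
    hF.continuous.prodMk ((hF2.2.continuous).prodMk
      (hR.continuous.prodMk hR2.2.continuous))
  have hrefl : Continuous (fun t : ℝ => 2 * T - t) := by continuity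
  have hycont : Continuous y :=
    (hF.continuous.comp hrefl).prodMk ((hF2.2.continuous.comp hrefl).neg.prodMk
      ((hR.continuous.comp hrefl).prodMk (hR2.2.continuous.comp hrefl).neg))
  have hxderiv : ∀ t, HasDerivAt x (vfield a (x t)) t := by
    intro t
    have := ((hFd t).prodMk ((hFd2 t).prodMk ((hRd t).prodMk (hRd2 t))))
    convert this using 1
    simp only [vfield, hxdef, hFode t, hRode t]
  have hreflD : ∀ t : ℝ, HasDerivAt (fun s : ℝ => 2 * T - s) (-1) t := by
    intro t
    exact (hasDerivAt_id' (x := t)).const_sub (2 * T)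
  have hyderiv : ∀ t, HasDerivAt y (vfield a (y t)) t := by
    intro t
    have c1 : HasDerivAt (fun s => F (2 * T - s)) (-deriv F (2 * T - t)) t := by
      have := (hFd (2 * T - t)).comp t (hreflD t); rw [mul_neg_one] at this; exact this
    have c2 : HasDerivAt (fun s => -deriv F (2 * T - s)) (deriv (deriv F) (2 * T - t)) t := by
      have := ((hFd2 (2 * T - t)).comp t (hreflD t)).neg
      rw [mul_neg_one, neg_neg] at this; exact this
    have c3 : HasDerivAt (fun s => R (2 * T - s)) (-deriv R (2 * T - t)) t := by
      have := (hRd (2 * T - t)).comp t (hreflD t); rw [mul_neg_one] at this; exact this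
    have c4 : HasDerivAt (fun s => -deriv R (2 * T - s)) (deriv (deriv R) (2 * T - t)) t := by
      have := ((hRd2 (2 * T - t)).comp t (hreflD t)).neg
      rw [mul_neg_one, neg_neg] at this; exact this
    have := c1.prodMk (c2.prodMk (c3.prodMk c4))
    convert this using 1
    simp only [vfield, hydef, hFode (2 * T - t), hRode (2 * T - t)]
  -- the agreement set is clopen and nonempty
  set E : Set ℝ := {t | x t = y t} with hEdef
  have hclosed : IsClosed E := isClosed_eq hxcont hycont
  have hT : T ∈ E := by
    have h2T : 2 * T - T = T := by ring
    simp only [hEdef, hxdef, hydef, mem_setOf_eq, h2T, hFT, hRT, neg_zero]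
  have hopen : IsOpen E := by
    rw [isOpen_iff_mem_nhds]
    intro t₀ ht₀
    have hpos : (x t₀).2.2.1 ≠ 0 := (hRpos t₀).ne'
    obtain ⟨K, U, hU, hlip⟩ := (vfield_contDiffAt a (x t₀) hpos).exists_lipschitzOnWith
    have hxU : ∀ᶠ t in nhds t₀, x t ∈ U := hxcont.continuousAt.preimage_mem_nhds hU
    have hxy : x t₀ = y t₀ := ht₀
    have hyU : ∀ᶠ t in nhds t₀, y t ∈ U :=
      hycont.continuousAt.preimage_mem_nhds (hxy ▸ hU)
    have huniq := ODE_solution_unique_of_eventually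
      (v := fun _ : ℝ => vfield a) (s := fun _ : ℝ => U) (K := K)
      (Filter.Eventually.of_forall fun _ => hlip)
      (hxU.mono fun t ht => ⟨hxderiv t, ht⟩)
      (hyU.mono fun t ht => ⟨hyderiv t, ht⟩) ht₀
    exact huniq
  have hE : E = univ := by
    rcases isClopen_iff.mp ⟨hclosed, hopen⟩ with h | h
    · exact absurd (h ▸ hT) (notMem_empty T)
    · exact h
  have h0 : x 0 = y 0 := by
    have : (0 : ℝ) ∈ E := hE ▸ mem_univ 0
    exact this
  have h1 : F 0 = F (2 * T - 0) := congrArg Prod.fst h0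
  have h2 : deriv R 0 = -deriv R (2 * T - 0) := congrArg (fun p => p.2.2.2) h0
  constructor
  · rw [← show (2 : ℝ) * T - 0 = 2 * T by ring, ← h1, hF0]
  · have := h2
    rw [hR0, show (2 : ℝ) * T - 0 = 2 * T by ring] at this
    linarith [this]
end

section
/- Let x(t) = (0, 0, F(t)), y(t) = (R(t)·cos Θ(t), R(t)·sin Θ(t), −F(t)) and z(t) = (−R(t)·cos Θ(t), −R(t)·sin Θ(t), −F(t)) be curves in ℝ³. Suppose F and R are periodic with period P > 0: F(t + P) = F(t) and R(t + P) = R(t) for all t ∈ ℝ. Then for all t ∈ ℝ: x(t + P) = x(t), y(t + P) = ρ(y(t)) and z(t + P) = ρ(z(t)), where ρ : ℝ³ → ℝ³ is the rotation about the z-axis by the angle Θ(P), i.e. ρ(u, v, w) = (u·cos Θ(P) − v·sin Θ(P), u·sin Θ(P) + v·cos Θ(P), w). In particular the solution is reduced periodic with period P: the configuration at time t + P is obtained from the configuration at time t by a fixed rotation. -/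
/-- if `F` and `R` are `P`-periodic, then the solution is reduced
periodic with period `P`: after time `P` the configuration is obtained from the
initial one by the rotation `ρ` about the `z`-axis by angle `Θ P`. -/
theorem reduced_periodic
    (a : ℝ) (F R Θ : ℝ → ℝ)
    (hRcont : Continuous R) (hRpos : ∀ t, 0 < R t)
    (hΘ : Differentiable ℝ Θ) (hΘ0 : Θ 0 = 0)
    (hΘ' : ∀ t, deriv Θ t = 10 * a / R t ^ 2)
    (P : ℝ) (hP : 0 < P)
    (hFper : ∀ t, F (t + P) = F t) (hRper : ∀ t, R (t + P) = R t)
    (x y z : ℝ → EuclideanSpace ℝ (Fin 3))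
    (hx : ∀ t, x t = ![0, 0, F t])
    (hy : ∀ t, y t = ![R t * Real.cos (Θ t), R t * Real.sin (Θ t), -F t])
    (hz : ∀ t, z t = ![-(R t * Real.cos (Θ t)), -(R t * Real.sin (Θ t)), -F t])
    (ρ : EuclideanSpace ℝ (Fin 3) → EuclideanSpace ℝ (Fin 3))
    (hρ : ∀ p : EuclideanSpace ℝ (Fin 3),
      ρ p = ![p 0 * Real.cos (Θ P) - p 1 * Real.sin (Θ P),
              p 0 * Real.sin (Θ P) + p 1 * Real.cos (Θ P), p 2]) :
    ∀ t : ℝ, x (t + P) = x t ∧ y (t + P) = ρ (y t) ∧ z (t + P) = ρ (z t) := by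
  have hdg : ∀ t : ℝ, HasDerivAt (fun s => Θ (s + P) - Θ s) 0 t := by
    intro t
    have h1 : HasDerivAt (fun s => Θ (s + P)) (deriv Θ (t + P)) t := by
      have := ((hΘ (t + P)).hasDerivAt).comp t ((hasDerivAt_id t).add_const P)
      rw [mul_one] at this
      exact this
    have h2 := (h1.sub (hΘ t).hasDerivAt)
    have : deriv Θ (t + P) - deriv Θ t = 0 := by
      rw [hΘ', hΘ', hRper, sub_self]
    rwa [this] at h2
  have hconst : ∀ t : ℝ, Θ (t + P) - Θ t = Θ P := by
    intro t
    have := is_const_of_deriv_eq_zero (f := fun s => Θ (s + P) - Θ s)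
      (fun s => (hdg s).differentiableAt)
      (fun s => (hdg s).deriv) t 0
    simpa [hΘ0] using this
  have hkey : ∀ t : ℝ, Θ (t + P) = Θ t + Θ P := fun t => by
    have := hconst t; linarith
  intro t
  refine ⟨?_, ?_, ?_⟩
  · apply WithLp.ofLp_injective; rw [hx, hx, hFper]
  · apply WithLp.ofLp_injective; rw [hy, hρ, hy]
    funext i
    fin_cases i <;>
      simp [hRper, hkey, hFper, Real.cos_add, Real.sin_add] <;> ring
  · apply WithLp.ofLp_injective; rw [hz, hρ, hz]
    funext i
    fin_cases i <;>
      simp [hRper, hkey, hFper, Real.cos_add, Real.sin_add] <;> ring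
end

section
/- Let x(t) = (0, 0, F(t)), y(t) = (R(t)·cos Θ(t), R(t)·sin Θ(t), −F(t)) and z(t) = (−R(t)·cos Θ(t), −R(t)·sin Θ(t), −F(t)) be curves in ℝ³. Suppose F and R are periodic with period P > 0, and suppose Θ(P)/π is rational, say Θ(P) = (p/q)·π with p an integer and q a positive integer. Then the motion is fully periodic with period 2qP: for all t ∈ ℝ, x(t + 2qP) = x(t), y(t + 2qP) = y(t) and z(t + 2qP) = z(t). -/
/-- if `F` and `R` are `P`-periodic and `Θ P` is a rational
multiple `(p/q)·π` of `π`, then the motion is fully periodic with period `2 q P`. -/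
theorem fully_periodic
    (a : ℝ) (F R Θ : ℝ → ℝ)
    (hRcont : Continuous R) (hRpos : ∀ t, 0 < R t)
    (hΘ : Differentiable ℝ Θ) (hΘ0 : Θ 0 = 0)
    (hΘ' : ∀ t, deriv Θ t = 10 * a / R t ^ 2)
    (P : ℝ) (hP : 0 < P)
    (hFper : ∀ t, F (t + P) = F t) (hRper : ∀ t, R (t + P) = R t)
    (p : ℤ) (q : ℕ) (hq : 0 < q)
    (hrat : Θ P = ((p : ℝ) / (q : ℝ)) * Real.pi)
    (x y z : ℝ → EuclideanSpace ℝ (Fin 3))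
    (hx : ∀ t, x t = ![0, 0, F t])
    (hy : ∀ t, y t = ![R t * Real.cos (Θ t), R t * Real.sin (Θ t), -F t])
    (hz : ∀ t, z t = ![-(R t * Real.cos (Θ t)), -(R t * Real.sin (Θ t)), -F t]) :
    ∀ t : ℝ, x (t + 2 * q * P) = x t ∧ y (t + 2 * q * P) = y t ∧
      z (t + 2 * q * P) = z t := by
  -- Θ(t+P) = Θ(t) + Θ(P)
  have hΘstep : ∀ t, Θ (t + P) = Θ t + Θ P := by
    have hg : Differentiable ℝ (fun t => Θ (t + P) - Θ t) := by
      exact (hΘ.comp (differentiable_id.add_const P)).sub hΘ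
    have hg' : ∀ t, deriv (fun t => Θ (t + P) - Θ t) t = 0 := by
      intro t
      have h1 : HasDerivAt (fun t => Θ (t + P)) (deriv Θ (t + P)) t := by
        have := (hΘ (t + P)).hasDerivAt.comp t
          ((hasDerivAt_id t).add_const P)
        rw [mul_one] at this
        exact this
      have h2 : HasDerivAt (fun t => Θ (t + P) - Θ t)
          (deriv Θ (t + P) - deriv Θ t) t := h1.sub (hΘ t).hasDerivAt
      rw [h2.deriv, hΘ', hΘ', hRper]
      ring
    intro t
    have := is_const_of_deriv_eq_zero hg hg' t 0
    simp only [zero_add, hΘ0, sub_zero] at this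
    linarith
  -- Θ(t + n·P) = Θ t + n·Θ P, and periodicity of F, R via n steps
  have hΘn : ∀ (n : ℕ) (t : ℝ), Θ (t + n * P) = Θ t + n * Θ P := by
    intro n
    induction n with
    | zero => simp
    | succ k ih =>
        intro t
        have : t + (k + 1 : ℕ) * P = (t + k * P) + P := by push_cast; ring
        rw [this, hΘstep, ih]; push_cast; ring
  have hFn : ∀ (n : ℕ) (t : ℝ), F (t + n * P) = F t := by
    intro n
    induction n with
    | zero => simp
    | succ k ih =>
        intro t
        have : t + (k + 1 : ℕ) * P = (t + k * P) + P := by push_cast; ring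
        rw [this, hFper, ih]
  have hRn : ∀ (n : ℕ) (t : ℝ), R (t + n * P) = R t := by
    intro n
    induction n with
    | zero => simp
    | succ k ih =>
        intro t
        have : t + (k + 1 : ℕ) * P = (t + k * P) + P := by push_cast; ring
        rw [this, hRper, ih]
  intro t
  have h2q : (2 : ℝ) * q * P = ((2 * q : ℕ) : ℝ) * P := by push_cast; ring
  have hF2 : F (t + 2 * q * P) = F t := by rw [h2q, hFn]
  have hR2 : R (t + 2 * q * P) = R t := by rw [h2q, hRn]
  have hΘ2 : Θ (t + 2 * q * P) = Θ t + p * (2 * Real.pi) := by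
    rw [h2q, hΘn, hrat]
    have hq0 : (q : ℝ) ≠ 0 := Nat.cast_ne_zero.mpr hq.ne'
    push_cast
    field_simp
  have hcos : Real.cos (Θ (t + 2 * q * P)) = Real.cos (Θ t) := by
    rw [hΘ2, Real.cos_add_int_mul_two_pi]
  have hsin : Real.sin (Θ (t + 2 * q * P)) = Real.sin (Θ t) := by
    rw [hΘ2, Real.sin_add_int_mul_two_pi]
  refine ⟨?_, ?_, ?_⟩
  · apply WithLp.ofLp_injective 2
    rw [hx, hx, hF2]
  · apply WithLp.ofLp_injective 2
    rw [hy, hy, hF2, hR2, hcos, hsin]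
  · apply WithLp.ofLp_injective 2
    rw [hz, hz, hF2, hR2, hcos, hsin]
end
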